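/- For every r ≥ 1, the polynomial s_r(x|y) = Σ_{j=0}^{min(r,n)} (−1)^j p_{r−j}(x) σ_j(y) (the formal supercharacter of the super-symmetric power S^r(E)) has a unique lowest exponent with respect to the dominance order: setting κ_r = (0,…,0 | 0,…,0, 1,…,1 (r ones)) ∈ ℕ^{m+n} if r ≤ n and κ_r = (0,…,0, r−n | 1,…,1) if r > n, the coefficient of the monomial with exponent vector κ_r in s_r equals (−1)^{min(r,n)} (in particular it is nonzero), and every exponent vector λ ∈ ℕ^{m+n} of a monomial occurring with nonzero coefficient in s_r satisfies λ ≥ κ_r, with λ > κ_r whenever λ ≠ κ_r. -/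

import Mathlib

/-- Partial sum of the first `k` coordinates of `μ ∈ ℤ^{m+n}`. -/
def psum (m n : ℕ) (μ : Fin (m + n) → ℤ) (k : ℕ) : ℤ :=
  ∑ i : Fin (m + n), if (i : ℕ) < k then μ i else 0

/-- Dominance order on `ℤ^{m+n}`: `μ ≤ λ` iff all proper initial partial sums of `μ` are
at most those of `λ`, and the total sums agree. -/
def domLE (m n : ℕ) (μ lam : Fin (m + n) → ℤ) : Prop :=
  (∀ k : ℕ, 1 ≤ k → k < m + n → psum m n μ k ≤ psum m n lam k) ∧
    psum m n μ (m + n) = psum m n lam (m + n)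

/-- Strict dominance order. -/
def domLT (m n : ℕ) (μ lam : Fin (m + n) → ℤ) : Prop :=
  domLE m n μ lam ∧ μ ≠ lam

/-- Membership in `X(T)^+`: the first `m` coordinates are weakly decreasing, and the last `n`
coordinates are weakly decreasing. -/
def IsDominant (m n : ℕ) (lam : Fin (m + n) → ℤ) : Prop :=
  (∀ i j : Fin (m + n), (i : ℕ) ≤ (j : ℕ) → (j : ℕ) < m → lam j ≤ lam i) ∧
    (∀ i j : Fin (m + n), m ≤ (i : ℕ) → (i : ℕ) ≤ (j : ℕ) → lam j ≤ lam i)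

/-- Convert the exponent vector of a monomial in `x₁,…,x_m,y₁,…,y_n` into an element of
`ℤ^{m+n}`, the first `m` coordinates being the `x`-exponents, the last `n` the
`y`-exponents. -/
def expVec (m n : ℕ) (d : (Fin m ⊕ Fin n) →₀ ℕ) : Fin (m + n) → ℤ :=
  fun k =>
    if h : (k : ℕ) < m then (d (Sum.inl ⟨(k : ℕ), h⟩) : ℤ)
    else (d (Sum.inr ⟨(k : ℕ) - m, by have := k.isLt; omega⟩) : ℤ)

/-- The polynomial `s_r(x|y) = Σ_{j=0}^{min(r,n)} (−1)^j p_{r−j}(x) σ_j(y)` (the formal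
supercharacter of the super-symmetric power `S^r(E)`), where `σ_j` is the `j`-th
elementary symmetric polynomial and `p_i` the `i`-th complete homogeneous symmetric
polynomial. -/
noncomputable def sPoly (K : Type*) [CommRing K] (m n : ℕ) (r : ℕ) :
    MvPolynomial (Fin m ⊕ Fin n) K :=
  ∑ j ∈ Finset.range (min r n + 1),
    (-1 : MvPolynomial (Fin m ⊕ Fin n) K) ^ j *
      (MvPolynomial.rename Sum.inl (MvPolynomial.hsymm (Fin m) K (r - j)) *
        MvPolynomial.rename Sum.inr (MvPolynomial.esymm (Fin n) K j))

/-- The exponent vector `κ_r`: equal to `(0^m | 0^{n−r}, 1^r)` if `r ≤ n`, and to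
`(0^{m−1}, r−n | 1^n)` if `r > n`. -/
noncomputable def kappaExp (m n r : ℕ) : (Fin m ⊕ Fin n) →₀ ℕ :=
  Finsupp.equivFunOnFinite.symm (fun i : Fin m ⊕ Fin n =>
    match i with
    | Sum.inl a => if r ≤ n then 0 else (if (a : ℕ) = m - 1 then r - n else 0)
    | Sum.inr b => if r ≤ n then (if n - r ≤ (b : ℕ) then 1 else 0) else 1)

section Helpers

open MvPolynomial Finset
set_option linter.unusedSectionVars false
set_option linter.unusedVariables false
set_option linter.unnecessarySimpa false

variable {K : Type*} [Field K] {σ τ : Type*} [Fintype σ] [Fintype τ] [DecidableEq σ]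
  [DecidableEq τ]

lemma sum_eq_card_toMultiset (d : σ →₀ ℕ) :
    ∑ i, d i = Multiset.card d.toMultiset := by
  rw [Finsupp.card_toMultiset, Finsupp.sum_fintype]
  · rfl
  · intro; rfl

lemma multiset_prod_X (s : Multiset σ) :
    ((s.map (X : σ → MvPolynomial σ K)).prod) = monomial s.toFinsupp 1 := by
  induction s using Multiset.induction_on with
  | empty => simp
  | cons a t ih =>
      rw [Multiset.map_cons, Multiset.prod_cons, ih, ← Multiset.singleton_add, map_add,
        Multiset.toFinsupp_singleton, monomial_single_add, pow_one]

lemma coeff_hsymm' (N : ℕ) (d : σ →₀ ℕ) :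
    coeff d (hsymm σ K N) = if (∑ i, d i) = N then 1 else 0 := by
  rw [hsymm]
  simp_rw [multiset_prod_X, MvPolynomial.coeff_sum, coeff_monomial]
  by_cases h : (∑ i, d i) = N
  · rw [if_pos h]
    have hd : Multiset.card d.toMultiset = N := by rw [← sum_eq_card_toMultiset, h]
    refine (Finset.sum_eq_single_of_mem
      (f := fun s : Sym σ N => if Multiset.toFinsupp ↑s = d then (1:K) else 0)
      (⟨d.toMultiset, hd⟩ : Sym σ N) (Finset.mem_univ _) ?_).trans ?_
    · intro s _ hs
      rw [if_neg]
      intro he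
      apply hs
      apply Subtype.ext
      have := congrArg Finsupp.toMultiset he
      rw [Multiset.toFinsupp_toMultiset] at this
      exact this
    · rw [if_pos]; exact Finsupp.toMultiset_toFinsupp d
  · rw [if_neg h]
    apply Finset.sum_eq_zero
    intro s _
    rw [if_neg]
    intro he
    apply h
    rw [sum_eq_card_toMultiset, ← he, Multiset.toFinsupp_toMultiset]
    exact s.2

lemma indicator_apply (t : Finset σ) (i : σ) :
    (∑ j ∈ t, Finsupp.single j 1 : σ →₀ ℕ) i = if i ∈ t then 1 else 0 := by
  rw [Finset.sum_apply']
  simp_rw [Finsupp.single_apply]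
  rw [Finset.sum_ite_eq' t i (fun _ => 1)]

lemma indicator_inj {t t' : Finset σ}
    (h : (∑ j ∈ t, Finsupp.single j 1 : σ →₀ ℕ) = ∑ j ∈ t', Finsupp.single j 1) : t = t' := by
  ext i
  have := congrArg (fun f : σ →₀ ℕ => f i) h
  simp only [indicator_apply] at this
  by_cases h1 : i ∈ t <;> by_cases h2 : i ∈ t' <;> simp_all

lemma indSum (t : Finset σ) :
    ∑ i, (∑ j ∈ t, Finsupp.single j 1 : σ →₀ ℕ) i = t.card := by
  simp_rw [indicator_apply]
  rw [Finset.sum_ite_mem, Finset.univ_inter, Finset.card_eq_sum_ones]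

lemma coeff_esymm_ind (t : Finset σ) (j : ℕ) :
    coeff (∑ i ∈ t, Finsupp.single i 1) (esymm σ K j) = if j = t.card then 1 else 0 := by
  rw [esymm_eq_sum_monomial]
  simp_rw [MvPolynomial.coeff_sum, coeff_monomial]
  by_cases h : j = t.card
  · rw [if_pos h]
    refine (Finset.sum_eq_single_of_mem t ?_ ?_).trans (if_pos rfl)
    · rw [Finset.mem_powersetCard_univ, h]
    · intro t' _ ht'
      rw [if_neg fun he => ht' (indicator_inj he)]
  · rw [if_neg h]
    apply Finset.sum_eq_zero
    intro t' ht'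
    rw [if_neg]
    intro he
    rw [Finset.mem_powersetCard_univ] at ht'
    exact h (by rw [← ht']; exact congrArg Finset.card (indicator_inj he))

lemma coeff_esymm_ne {j : ℕ} {d : σ →₀ ℕ}
    (h : coeff d (esymm σ K j) ≠ 0) : (∀ i, d i ≤ 1) ∧ ∑ i, d i = j := by
  rw [esymm_eq_sum_monomial, MvPolynomial.coeff_sum] at h
  obtain ⟨t, ht, hne⟩ : ∃ t ∈ powersetCard j (univ : Finset σ),
      coeff d (monomial (∑ i ∈ t, Finsupp.single i 1) (1:K)) ≠ 0 := by
    by_contra hc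
    push_neg at hc
    exact h (Finset.sum_eq_zero hc)
  rw [coeff_monomial] at hne
  have hd : (∑ i ∈ t, Finsupp.single i 1 : σ →₀ ℕ) = d := by
    by_contra hc; rw [if_neg hc] at hne; exact hne rfl
  rw [Finset.mem_powersetCard_univ] at ht
  subst hd
  constructor
  · intro i
    rw [indicator_apply]
    split <;> omega
  · rw [indSum, ht]

lemma sumElim_eq_mapDomain (a : σ →₀ ℕ) (b : τ →₀ ℕ) :
    Finsupp.sumElim a b = a.mapDomain Sum.inl + b.mapDomain Sum.inr := by
  ext i
  cases i with
  | inl x =>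
      rw [Finsupp.sumElim_inl, Finsupp.add_apply,
        Finsupp.mapDomain_apply Sum.inl_injective,
        Finsupp.mapDomain_notin_range _ _ (by simp), add_zero]
  | inr y =>
      rw [Finsupp.sumElim_inr, Finsupp.add_apply,
        Finsupp.mapDomain_apply Sum.inr_injective,
        Finsupp.mapDomain_notin_range _ _ (by simp), zero_add]

lemma sumElim_inj {a a' : σ →₀ ℕ} {b b' : τ →₀ ℕ}
    (h : Finsupp.sumElim a b = Finsupp.sumElim a' b') : a = a' ∧ b = b' := by
  constructor
  · ext x; exact congrArg (fun f : σ ⊕ τ →₀ ℕ => f (Sum.inl x)) h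
  · ext y; exact congrArg (fun f : σ ⊕ τ →₀ ℕ => f (Sum.inr y)) h

lemma finsupp_decomp (d : σ ⊕ τ →₀ ℕ) :
    d = Finsupp.sumElim ((Finsupp.sumFinsuppEquivProdFinsupp d).1)
      ((Finsupp.sumFinsuppEquivProdFinsupp d).2) := by
  ext i
  cases i with
  | inl x => rw [Finsupp.sumElim_inl, Finsupp.fst_sumFinsuppEquivProdFinsupp]
  | inr y => rw [Finsupp.sumElim_inr, Finsupp.snd_sumFinsuppEquivProdFinsupp]

lemma coeff_sep (P : MvPolynomial σ K) (Q : MvPolynomial τ K) (a : σ →₀ ℕ) (b : τ →₀ ℕ) :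
    coeff (Finsupp.sumElim a b) (rename Sum.inl P * rename Sum.inr Q)
      = coeff a P * coeff b Q := by
  induction P using MvPolynomial.induction_on' with
  | add p1 p2 h1 h2 => rw [map_add, add_mul, coeff_add, h1, h2, coeff_add, add_mul]
  | monomial u c =>
    induction Q using MvPolynomial.induction_on' with
    | add q1 q2 h1 h2 => rw [map_add, mul_add, coeff_add, h1, h2, coeff_add, mul_add]
    | monomial v c' =>
      rw [rename_monomial, rename_monomial, monomial_mul, coeff_monomial, coeff_monomial,
        coeff_monomial, sumElim_eq_mapDomain]
      by_cases hu : u = a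
      · by_cases hv : v = b
        · subst hu; subst hv; rw [if_pos rfl, if_pos rfl, if_pos rfl]
        · rw [if_neg hv, mul_zero, if_neg]
          intro he
          rw [← sumElim_eq_mapDomain, ← sumElim_eq_mapDomain] at he
          exact hv (sumElim_inj he).2
      · rw [if_neg hu, zero_mul, if_neg]
        intro he
        rw [← sumElim_eq_mapDomain, ← sumElim_eq_mapDomain] at he
        exact hu (sumElim_inj he).1

lemma coeff_sPoly_eq (m n r : ℕ) (a : Fin m →₀ ℕ) (b : Fin n →₀ ℕ) :
    coeff (Finsupp.sumElim a b) (sPoly K m n r)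
      = ∑ j ∈ Finset.range (min r n + 1),
          (-1 : K) ^ j * (coeff a (hsymm (Fin m) K (r - j)) * coeff b (esymm (Fin n) K j)) := by
  rw [sPoly, MvPolynomial.coeff_sum]
  refine Finset.sum_congr rfl fun j _ => ?_
  have hC : ((-1 : MvPolynomial (Fin m ⊕ Fin n) K))^j = C ((-1 : K)^j) := by
    rw [map_pow, map_neg, map_one]
  rw [hC, coeff_C_mul, coeff_sep]

lemma main_A {m n r : ℕ} (hr : 1 ≤ r) {d : (Fin m ⊕ Fin n) →₀ ℕ}
    (h : coeff d (sPoly K m n r) ≠ 0) :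
    ((∑ x, d (Sum.inl x)) + ∑ y, d (Sum.inr y) = r) ∧ ∀ y, d (Sum.inr y) ≤ 1 := by
  set a := (Finsupp.sumFinsuppEquivProdFinsupp d).1 with ha
  set b := (Finsupp.sumFinsuppEquivProdFinsupp d).2 with hb
  have hd : d = Finsupp.sumElim a b := finsupp_decomp d
  rw [hd, coeff_sPoly_eq] at h
  obtain ⟨j, hj, hne⟩ : ∃ j ∈ Finset.range (min r n + 1),
      (-1:K)^j * (coeff a (hsymm (Fin m) K (r - j)) * coeff b (esymm (Fin n) K j)) ≠ 0 := by
    by_contra hc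
    push_neg at hc
    exact h (Finset.sum_eq_zero hc)
  rw [Finset.mem_range] at hj
  have hja : coeff a (hsymm (Fin m) K (r - j)) ≠ 0 := fun h0 => hne (by rw [h0]; ring)
  have hjb : coeff b (esymm (Fin n) K j) ≠ 0 := fun h0 => hne (by rw [h0]; ring)
  rw [coeff_hsymm'] at hja
  have hsa : ∑ i, a i = r - j := by by_contra hc; rw [if_neg hc] at hja; exact hja rfl
  obtain ⟨hble, hsb⟩ := coeff_esymm_ne hjb
  have haeq : ∀ x, d (Sum.inl x) = a x := fun x => by rw [hd, Finsupp.sumElim_inl]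
  have hbeq : ∀ y, d (Sum.inr y) = b y := fun y => by rw [hd, Finsupp.sumElim_inr]
  refine ⟨?_, fun y => by rw [hbeq]; exact hble y⟩
  simp_rw [haeq, hbeq]
  rw [hsa, hsb]
  omega

lemma count_lt (N k : ℕ) (hk : k ≤ N) :
    ∑ i : Fin N, (if (i : ℕ) < k then (1:ℤ) else 0) = (k : ℤ) := by
  rw [Fin.sum_univ_eq_sum_range (fun i => if i < k then (1:ℤ) else 0) N,
    Finset.range_eq_Ico, ← Finset.sum_Ico_consecutive _ (Nat.zero_le k) hk]
  have h1 : ∑ i ∈ Finset.Ico 0 k, (if i < k then (1:ℤ) else 0) = k := by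
    rw [Finset.sum_congr rfl fun i hi => if_pos (Finset.mem_Ico.mp hi).2]
    simp
  have h2 : ∑ i ∈ Finset.Ico k N, (if i < k then (1:ℤ) else 0) = 0 := by
    rw [Finset.sum_congr rfl fun i hi => if_neg (by have := (Finset.mem_Ico.mp hi).1; omega)]
    simp
  rw [h1, h2, add_zero]

lemma count_ge (N k : ℕ) (hk : k ≤ N) :
    ∑ i : Fin N, (if (i : ℕ) < k then (0:ℤ) else 1) = (N : ℤ) - k := by
  have h2 : ∀ i : Fin N,
      (if (i:ℕ) < k then (0:ℤ) else 1) = 1 - (if (i:ℕ) < k then (1:ℤ) else 0) := by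
    intro i; split <;> ring
  simp_rw [h2]
  rw [Finset.sum_sub_distrib, count_lt N k hk, Finset.sum_const, Finset.card_univ,
    Fintype.card_fin]
  simp

lemma psum_total (m n : ℕ) (v : Fin (m + n) → ℤ) :
    _root_.psum m n v (m + n) = ∑ i : Fin (m + n), v i :=
  Finset.sum_congr rfl fun i _ => if_pos i.isLt

lemma psum_split (m n k : ℕ) (v : Fin (m + n) → ℤ) :
    _root_.psum m n v k
      = _root_.psum m n v (m + n) - ∑ i : Fin (m + n), (if (i : ℕ) < k then 0 else v i) := by
  rw [psum_total, eq_sub_iff_add_eq, _root_.psum, ← Finset.sum_add_distrib]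
  exact Finset.sum_congr rfl fun i _ => by split <;> ring

lemma expVec_castAdd (m n : ℕ) (d : (Fin m ⊕ Fin n) →₀ ℕ) (x : Fin m) :
    expVec m n d (Fin.castAdd n x) = (d (Sum.inl x) : ℤ) := by
  rw [expVec, dif_pos (by simpa using x.isLt)]
  exact congrArg (fun z : Fin m => (d (Sum.inl z) : ℤ)) (Fin.ext (by simp))

lemma expVec_natAdd (m n : ℕ) (d : (Fin m ⊕ Fin n) →₀ ℕ) (y : Fin n) :
    expVec m n d (Fin.natAdd m y) = (d (Sum.inr y) : ℤ) := by
  rw [expVec, dif_neg (by simp)]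
  exact congrArg (fun z : Fin n => (d (Sum.inr z) : ℤ)) (Fin.ext (by simp))

lemma sum_expVec (m n : ℕ) (d : (Fin m ⊕ Fin n) →₀ ℕ) :
    ∑ i : Fin (m + n), expVec m n d i
      = (∑ x : Fin m, (d (Sum.inl x) : ℤ)) + ∑ y : Fin n, (d (Sum.inr y) : ℤ) := by
  rw [Fin.sum_univ_add]
  congr 1
  · exact Finset.sum_congr rfl fun x _ => expVec_castAdd m n d x
  · exact Finset.sum_congr rfl fun y _ => expVec_natAdd m n d y

lemma expVec_nonneg (m n : ℕ) (d : (Fin m ⊕ Fin n) →₀ ℕ) (i : Fin (m + n)) :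
    0 ≤ expVec m n d i := by
  rw [expVec]; split <;> positivity

lemma expVec_le_one (m n : ℕ) (d : (Fin m ⊕ Fin n) →₀ ℕ) (h1 : ∀ y, d (Sum.inr y) ≤ 1)
    (i : Fin (m + n)) (hi : m ≤ (i : ℕ)) : expVec m n d i ≤ 1 := by
  rw [expVec, dif_neg (by omega)]
  exact_mod_cast h1 _

lemma psum_ge (m n r k : ℕ) (v : Fin (m + n) → ℤ) (hk1 : m ≤ k) (hk2 : k ≤ m + n)
    (htot : _root_.psum m n v (m + n) = r) (hone : ∀ i : Fin (m + n), m ≤ (i : ℕ) → v i ≤ 1) :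
    (r : ℤ) - ((m : ℤ) + n - k) ≤ _root_.psum m n v k := by
  rw [psum_split, htot]
  have hle : ∑ i : Fin (m + n), (if (i : ℕ) < k then (0:ℤ) else v i)
      ≤ ∑ i : Fin (m + n), (if (i : ℕ) < k then (0:ℤ) else 1) := by
    refine Finset.sum_le_sum fun i _ => ?_
    split
    · exact le_refl _
    · exact hone i (by omega)
  rw [count_ge (m + n) k hk2] at hle
  push_cast at hle ⊢
  linarith

lemma psum_le (m n r k : ℕ) (v : Fin (m + n) → ℤ) (hk2 : k ≤ m + n)
    (htot : _root_.psum m n v (m + n) = r)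
    (hge1 : ∀ i : Fin (m + n), k ≤ (i : ℕ) → 1 ≤ v i) :
    _root_.psum m n v k ≤ (r : ℤ) - ((m : ℤ) + n - k) := by
  rw [psum_split, htot]
  have hle : ∑ i : Fin (m + n), (if (i : ℕ) < k then (0:ℤ) else 1)
      ≤ ∑ i : Fin (m + n), (if (i : ℕ) < k then (0:ℤ) else v i) := by
    refine Finset.sum_le_sum fun i _ => ?_
    split
    · exact le_refl _
    · exact hge1 i (by omega)
  rw [count_ge (m + n) k hk2] at hle
  push_cast at hle ⊢
  linarith

lemma psum_nonneg (m n k : ℕ) (v : Fin (m + n) → ℤ) (h : ∀ i, 0 ≤ v i) :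
    0 ≤ _root_.psum m n v k := by
  refine Finset.sum_nonneg fun i _ => ?_
  split
  · exact h i
  · exact le_refl _

lemma kappa_inl (m n r : ℕ) (a : Fin m) :
    kappaExp m n r (Sum.inl a)
      = if r ≤ n then 0 else (if (a : ℕ) = m - 1 then r - n else 0) := by
  simp [kappaExp]

lemma kappa_inr (m n r : ℕ) (b : Fin n) :
    kappaExp m n r (Sum.inr b)
      = if r ≤ n then (if n - r ≤ (b : ℕ) then 1 else 0) else 1 := by
  simp [kappaExp]

lemma count_ge_nat (N k : ℕ) (hk : k ≤ N) :
    ∑ i : Fin N, (if k ≤ (i : ℕ) then (1:ℕ) else 0) = N - k := by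
  rw [Fin.sum_univ_eq_sum_range (fun i => if k ≤ i then (1:ℕ) else 0) N,
    Finset.range_eq_Ico, ← Finset.sum_Ico_consecutive _ (Nat.zero_le k) hk]
  have h1 : ∑ i ∈ Finset.Ico 0 k, (if k ≤ i then (1:ℕ) else 0) = 0 := by
    rw [Finset.sum_congr rfl fun i hi => if_neg (by have := (Finset.mem_Ico.mp hi).2; omega)]
    simp
  have h2 : ∑ i ∈ Finset.Ico k N, (if k ≤ i then (1:ℕ) else 0) = N - k := by
    rw [Finset.sum_congr rfl fun i hi => if_pos (Finset.mem_Ico.mp hi).1]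
    simp [Nat.card_Ico]
  rw [h1, h2, zero_add]

lemma kappa_decomp_le (m n r : ℕ) (h : r ≤ n) :
    kappaExp m n r = Finsupp.sumElim 0
      (∑ b ∈ Finset.filter (fun b : Fin n => n - r ≤ (b : ℕ)) univ, Finsupp.single b 1) := by
  ext i
  cases i with
  | inl a => rw [kappa_inl, if_pos h, Finsupp.sumElim_inl]; rfl
  | inr b =>
      rw [kappa_inr, if_pos h, Finsupp.sumElim_inr, indicator_apply]
      simp only [Finset.mem_filter, Finset.mem_univ, true_and]

lemma kappa_card_le (m n r : ℕ) (h : r ≤ n) :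
    (Finset.filter (fun b : Fin n => n - r ≤ (b : ℕ)) univ).card = r := by
  rw [← indSum]
  calc ∑ i, (∑ j ∈ Finset.filter (fun b : Fin n => n - r ≤ (b : ℕ)) univ,
        Finsupp.single j 1 : Fin n →₀ ℕ) i
      = ∑ i : Fin n, (if n - r ≤ (i : ℕ) then (1:ℕ) else 0) := by
        refine Finset.sum_congr rfl fun i _ => ?_
        rw [indicator_apply]
        simp only [Finset.mem_filter, Finset.mem_univ, true_and]
    _ = n - (n - r) := count_ge_nat n (n - r) (by omega)
    _ = r := by omega

lemma kappa_decomp_gt (m n r : ℕ) (hm : 1 ≤ m) (h : ¬ r ≤ n) :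
    kappaExp m n r = Finsupp.sumElim
      (Finsupp.single (⟨m - 1, by omega⟩ : Fin m) (r - n))
      (∑ b ∈ (univ : Finset (Fin n)), Finsupp.single b 1) := by
  ext i
  cases i with
  | inl a =>
      rw [kappa_inl, if_neg h, Finsupp.sumElim_inl, Finsupp.single_apply]
      by_cases ha : (a : ℕ) = m - 1
      · rw [if_pos ha, if_pos (Fin.ext (by simp [ha]))]
      · rw [if_neg ha, if_neg (fun he => ha (by rw [← he]))]
  | inr b =>
      rw [kappa_inr, if_neg h, Finsupp.sumElim_inr, indicator_apply,
        if_pos (Finset.mem_univ b)]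

lemma single_fin_sum (m c : ℕ) (p : Fin m) :
    ∑ x : Fin m, Finsupp.single p c x = c := by
  simp_rw [Finsupp.single_apply]
  rw [Finset.sum_ite_eq univ p (fun _ => c), if_pos (Finset.mem_univ p)]

lemma coeff_kappa (K : Type*) [Field K] (m n r : ℕ) (hm : 1 ≤ m) (hr : 1 ≤ r) :
    coeff (kappaExp m n r) (sPoly K m n r) = (-1:K) ^ (min r n) := by
  by_cases hrn : r ≤ n
  · rw [kappa_decomp_le m n r hrn, coeff_sPoly_eq, Nat.min_eq_left hrn,
      Finset.sum_eq_single_of_mem r (Finset.mem_range.mpr (by omega))]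
    · rw [coeff_hsymm', coeff_esymm_ind, kappa_card_le m n r hrn,
        if_pos (by simp), if_pos rfl]
      ring
    · intro j hj hne
      rw [coeff_esymm_ind, kappa_card_le m n r hrn, if_neg hne, mul_zero, mul_zero]
  · rw [kappa_decomp_gt m n r hm hrn, coeff_sPoly_eq, Nat.min_eq_right (by omega),
      Finset.sum_eq_single_of_mem n (Finset.mem_range.mpr (by omega))]
    · rw [coeff_hsymm', coeff_esymm_ind, Finset.card_univ, Fintype.card_fin,
        single_fin_sum, if_pos rfl, if_pos rfl]
      ring
    · intro j hj hne
      rw [coeff_esymm_ind, Finset.card_univ, Fintype.card_fin, if_neg hne, mul_zero, mul_zero]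

end Helpers
section Helpers2
open MvPolynomial Finset
set_option linter.unusedSectionVars false

lemma expVec_kappa_le_zero (m n r : ℕ) (hrn : r ≤ n) (i : Fin (m + n))
    (hi : (i : ℕ) < m + n - r) : expVec m n (kappaExp m n r) i = 0 := by
  rw [expVec]
  split
  · rw [kappa_inl, if_pos hrn]; rfl
  · rw [kappa_inr, if_pos hrn, if_neg (by simp only []; omega)]; rfl

lemma expVec_kappa_le_one (m n r : ℕ) (hrn : r ≤ n) (i : Fin (m + n))
    (hi : m + n - r ≤ (i : ℕ)) : expVec m n (kappaExp m n r) i = 1 := by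
  rw [expVec, dif_neg (by omega)]
  rw [kappa_inr, if_pos hrn, if_pos (by simp only []; omega)]
  rfl

lemma expVec_kappa_gt_zero (m n r : ℕ) (hrn : ¬ r ≤ n) (i : Fin (m + n))
    (hi : (i : ℕ) + 1 < m) : expVec m n (kappaExp m n r) i = 0 := by
  rw [expVec, dif_pos (by omega)]
  rw [kappa_inl, if_neg hrn, if_neg (by simp only []; omega)]
  rfl

lemma expVec_kappa_gt_one (m n r : ℕ) (hrn : ¬ r ≤ n) (i : Fin (m + n))
    (hi : m ≤ (i : ℕ)) : expVec m n (kappaExp m n r) i = 1 := by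
  rw [expVec, dif_neg (by omega)]
  rw [kappa_inr, if_neg hrn]
  rfl

end Helpers2

/-- For `r ≥ 1`, the polynomial `s_r` has a unique lowest exponent `κ_r` for the
dominance order: the coefficient of the monomial with exponent `κ_r` is
`(−1)^{min(r,n)}` (in particular nonzero), and every exponent vector of a monomial
occurring with nonzero coefficient in `s_r` is `≥ κ_r`, strictly so when different
from `κ_r`. -/
theorem sPoly_lowest (K : Type*) [Field K] (m n : ℕ) (hm : 1 ≤ m) (hn : 1 ≤ n)
    (r : ℕ) (hr : 1 ≤ r) :
    MvPolynomial.coeff (kappaExp m n r) (sPoly K m n r) = (-1 : K) ^ (min r n) ∧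
      ∀ d : (Fin m ⊕ Fin n) →₀ ℕ, MvPolynomial.coeff d (sPoly K m n r) ≠ 0 →
        domLE m n (expVec m n (kappaExp m n r)) (expVec m n d) ∧
          (expVec m n d ≠ expVec m n (kappaExp m n r) →
            domLT m n (expVec m n (kappaExp m n r)) (expVec m n d)) := by
  have hco := coeff_kappa K m n r hm hr
  refine ⟨hco, ?_⟩
  have hκne : MvPolynomial.coeff (kappaExp m n r) (sPoly K m n r) ≠ 0 := by
    rw [hco]; exact pow_ne_zero _ (neg_ne_zero.mpr one_ne_zero)
  obtain ⟨hκtot', hκone⟩ := main_A hr hκne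
  have hκtot : psum m n (expVec m n (kappaExp m n r)) (m + n) = r := by
    rw [psum_total, sum_expVec]
    exact_mod_cast congrArg (Nat.cast : ℕ → ℤ) hκtot'
  intro d hdco
  obtain ⟨hdtot', hdone⟩ := main_A hr hdco
  have hdtot : psum m n (expVec m n d) (m + n) = r := by
    rw [psum_total, sum_expVec]
    exact_mod_cast congrArg (Nat.cast : ℕ → ℤ) hdtot'
  have hdom : domLE m n (expVec m n (kappaExp m n r)) (expVec m n d) := by
    refine ⟨?_, by rw [hκtot, hdtot]⟩
    intro k hk1 hk2
    by_cases hrn : r ≤ n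
    · by_cases hk : k ≤ m + n - r
      · have hz : psum m n (expVec m n (kappaExp m n r)) k = 0 := by
          refine Finset.sum_eq_zero fun i _ => ?_
          split
          · exact expVec_kappa_le_zero m n r hrn i (by omega)
          · rfl
        rw [hz]
        exact psum_nonneg m n k _ (expVec_nonneg m n d)
      · have h1 := psum_le m n r k _ (by omega) hκtot
          (fun i hi => le_of_eq (expVec_kappa_le_one m n r hrn i (by omega)).symm)
        have h2 := psum_ge m n r k _ (by omega) (by omega) hdtot
          (expVec_le_one m n d hdone)
        linarith
    · by_cases hk : k < m
      · have hz : psum m n (expVec m n (kappaExp m n r)) k = 0 := by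
          refine Finset.sum_eq_zero fun i _ => ?_
          split
          · exact expVec_kappa_gt_zero m n r hrn i (by omega)
          · rfl
        rw [hz]
        exact psum_nonneg m n k _ (expVec_nonneg m n d)
      · have h1 := psum_le m n r k _ (by omega) hκtot
          (fun i hi => le_of_eq (expVec_kappa_gt_one m n r hrn i (by omega)).symm)
        have h2 := psum_ge m n r k _ (by omega) (by omega) hdtot
          (expVec_le_one m n d hdone)
        linarith
  exact ⟨hdom, fun hne => ⟨hdom, fun he => hne he.symm⟩⟩
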